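/- Let H₁ and H₂ be finite-dimensional complex inner product spaces, let f, g : H₁ →ₗ[ℂ] H₂ be linear maps, and let s, t : ℂ be scalars with s * (starRingEnd ℂ s) = 1 and t * (starRingEnd ℂ t) = 1. If s • f = t • g, then TensorProduct.map f (LinearMap.adjoint f) = TensorProduct.map g (LinearMap.adjoint g). -/

import Mathlib

theorem stmt_0 {H₁ H₂ : Type*}
    [NormedAddCommGroup H₁] [InnerProductSpace ℂ H₁] [FiniteDimensional ℂ H₁]
    [NormedAddCommGroup H₂] [InnerProductSpace ℂ H₂] [FiniteDimensional ℂ H₂]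
    (f g : H₁ →ₗ[ℂ] H₂) (s t : ℂ)
    (hs : s * (starRingEnd ℂ) s = 1) (ht : t * (starRingEnd ℂ) t = 1)
    (h : s • f = t • g) :
    TensorProduct.map f (LinearMap.adjoint f) =
      TensorProduct.map g (LinearMap.adjoint g) := by
  have hs0 : s ≠ 0 := by
    intro h0; rw [h0] at hs; simp at hs
  have hf : f = (s⁻¹ * t) • g := by
    rw [mul_smul, ← h, ← mul_smul, inv_mul_cancel₀ hs0, one_smul]
  have hadj : LinearMap.adjoint f = (starRingEnd ℂ (s⁻¹ * t)) • LinearMap.adjoint g := by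
    rw [hf]; exact LinearEquiv.map_smulₛₗ (LinearMap.adjoint : (H₁ →ₗ[ℂ] H₂) ≃ₗ⋆[ℂ] (H₂ →ₗ[ℂ] H₁)) _ _
  conv_lhs => rw [hadj, hf]
  rw [ TensorProduct.map_smul_left, TensorProduct.map_smul_right, smul_smul]
  have : (s⁻¹ * t) * starRingEnd ℂ (s⁻¹ * t) = 1 := by
    have hc : starRingEnd ℂ s ≠ 0 := fun h0 => hs0 (by simpa using congrArg (starRingEnd ℂ) h0)
    field_simp
    rw [map_div₀, ← mul_div_assoc, ht, div_eq_iff hc, hs]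
  rw [this, one_smul]
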